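/- arXiv:1909.10558 — 3 statements merged into one kernel-verified Lean document; each statement's English description precedes it below -/
import Mathlib

section
/- Let Ω be the torus (R/R₀Z)^d, V ∈ L^∞(Ω) with V ≥ 0, and let u ∈ W^{1,2}(Ω) solve -Δu + Vu = 1 with periodic boundary conditions. Then for every periodic f ∈ W^{1,2}(Ω): ∫_Ω |∇f|² + V f² dx = ∫_Ω u² |∇(f/u)|² + (1/u) f² dx. -/
open MeasureTheory Set

/-- Pointwise Laplacian of `u : ℝ^d → ℝ`. -/
noncomputable def lap {d : ℕ} (u : EuclideanSpace ℝ (Fin d) → ℝ)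
    (x : EuclideanSpace ℝ (Fin d)) : ℝ :=
  ∑ i : Fin d, fderiv ℝ (fun y => fderiv ℝ u y (EuclideanSpace.single i 1)) x
    (EuclideanSpace.single i 1)

/-- Periodicity with respect to the lattice `R₀ ℤ^d`. -/
def IsPeriodic {d : ℕ} (R₀ : ℝ) (f : EuclideanSpace ℝ (Fin d) → ℝ) : Prop :=
  ∀ (x : EuclideanSpace ℝ (Fin d)) (i : Fin d),
    f (x + R₀ • EuclideanSpace.single i 1) = f x

/-- A fundamental domain `[0,R₀)^d` of the torus `(ℝ/R₀ℤ)^d`. -/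
def fund (d : ℕ) (R₀ : ℝ) : Set (EuclideanSpace ℝ (Fin d)) :=
  {x | ∀ i, x i ∈ Ico (0 : ℝ) R₀}

variable {d : ℕ}

noncomputable abbrev ee (d : ℕ) (i : Fin d) : EuclideanSpace ℝ (Fin d) :=
  EuclideanSpace.single i 1

lemma norm_sq_eq_sum (v : EuclideanSpace ℝ (Fin d)) : ‖v‖ ^ 2 = ∑ i, (v i) ^ 2 := by
  rw [EuclideanSpace.norm_eq, Real.sq_sqrt (by positivity)]
  simp [sq_abs]

lemma gradient_apply_coord (h : EuclideanSpace ℝ (Fin d) → ℝ) (x : EuclideanSpace ℝ (Fin d))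
    (i : Fin d) : gradient h x i = fderiv ℝ h x (ee d i) := by
  have h1 : (inner ℝ (gradient h x) (ee d i) : ℝ) = fderiv ℝ h x (ee d i) := by
    rw [gradient, InnerProductSpace.toDual_symm_apply]
  rw [← h1, EuclideanSpace.inner_single_right]
  simp

lemma norm_gradient_sq (h : EuclideanSpace ℝ (Fin d) → ℝ) (x : EuclideanSpace ℝ (Fin d)) :
    ‖gradient h x‖ ^ 2 = ∑ i, (fderiv ℝ h x (ee d i)) ^ 2 := by
  rw [norm_sq_eq_sum]
  exact Finset.sum_congr rfl fun i _ => by rw [gradient_apply_coord]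

lemma fderiv_shift (h : EuclideanSpace ℝ (Fin d) → ℝ) (hh : Differentiable ℝ h)
    (c x : EuclideanSpace ℝ (Fin d)) :
    fderiv ℝ (fun y => h (y + c)) x = fderiv ℝ h (x + c) := by
  have := ((hh (x + c)).hasFDerivAt.comp x ((hasFDerivAt_id x).add_const c)).fderiv
  simpa [Function.comp_def] using this

lemma fderiv_periodic {R₀ : ℝ} (h : EuclideanSpace ℝ (Fin d) → ℝ) (hh : Differentiable ℝ h)
    (hp : IsPeriodic R₀ h) (x : EuclideanSpace ℝ (Fin d)) (j : Fin d) :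
    fderiv ℝ h (x + R₀ • EuclideanSpace.single j 1) = fderiv ℝ h x := by
  rw [← fderiv_shift h hh]
  congr 1
  exact funext fun y => hp y j

lemma fund_measurable (R₀ : ℝ) : MeasurableSet (fund d R₀) := by
  have : fund d R₀ = ⋂ i, (fun x : EuclideanSpace ℝ (Fin d) => x i) ⁻¹' Ico (0:ℝ) R₀ := by
    ext x; simp [fund]
  rw [this]
  exact MeasurableSet.iInter fun i =>
    ((EuclideanSpace.proj i : EuclideanSpace ℝ (Fin d) →L[ℝ] ℝ).continuous.measurable)
      measurableSet_Ico

lemma icc_compact (R₀ : ℝ) :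
    IsCompact ((EuclideanSpace.equiv (Fin d) ℝ) ⁻¹' Icc 0 (fun _ => R₀)) :=
  (EuclideanSpace.equiv (Fin d) ℝ).toHomeomorph.isCompact_preimage.2 isCompact_Icc

lemma fund_subset_icc (R₀ : ℝ) :
    fund d R₀ ⊆ (EuclideanSpace.equiv (Fin d) ℝ) ⁻¹' Icc 0 (fun _ => R₀) := by
  intro x hx
  simp only [mem_preimage, mem_Icc, Pi.le_def]
  exact ⟨fun i => (hx i).1, fun i => (hx i).2.le⟩

lemma integrableOn_fund {R₀ : ℝ} {h : EuclideanSpace ℝ (Fin d) → ℝ} (hh : Continuous h) :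
    IntegrableOn h (fund d R₀) := by
  refine IntegrableOn.mono_set ?_ (fund_subset_icc R₀)
  exact hh.continuousOn.integrableOn_compact (icc_compact R₀)

lemma div_integral_zero (n : ℕ) (R₀ : ℝ) (hR : 0 < R₀)
    (φ : Fin (n+1) → EuclideanSpace ℝ (Fin (n+1)) → ℝ)
    (φ' : Fin (n+1) → EuclideanSpace ℝ (Fin (n+1)) → EuclideanSpace ℝ (Fin (n+1)) →L[ℝ] ℝ)
    (hφd : ∀ i x, HasFDerivAt (φ i) (φ' i x) x)
    (hφc : ∀ i, Continuous (φ i))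
    (hdivc : Continuous fun x => ∑ i, φ' i x (ee (n+1) i))
    (hper : ∀ i j x, φ i (x + R₀ • EuclideanSpace.single j 1) = φ i x) :
    ∫ x in fund (n+1) R₀, ∑ i, φ' i x (ee (n+1) i) = 0 := by
  letI : PartialOrder (EuclideanSpace ℝ (Fin (n+1))) :=
    PartialOrder.lift (fun x => (EuclideanSpace.equiv (Fin (n+1)) ℝ) x)
      (EuclideanSpace.equiv (Fin (n+1)) ℝ).injective
  set eL : EuclideanSpace ℝ (Fin (n+1)) ≃L[ℝ] (Fin (n+1) → ℝ) :=
    EuclideanSpace.equiv (Fin (n+1)) ℝ with heL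
  set b : EuclideanSpace ℝ (Fin (n+1)) := (EuclideanSpace.equiv (Fin (n+1)) ℝ).symm
    (fun _ => R₀) with hb
  have heLb : eL b = fun _ => R₀ := by
    rw [hb, heL]; exact (EuclideanSpace.equiv (Fin (n+1)) ℝ).apply_symm_apply _
  have heL0 : eL 0 = 0 := map_zero _
  have hIccSet : (Icc (0 : EuclideanSpace ℝ (Fin (n+1))) b : Set _) =
      eL ⁻¹' Icc 0 (fun _ => R₀) := by
    ext x
    simp only [mem_Icc, mem_preimage]
    rw [← heLb, ← heL0]
    exact Iff.rfl
  have hIccCompact : IsCompact (Icc (0 : EuclideanSpace ℝ (Fin (n+1))) b) := by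
    rw [hIccSet]; exact icc_compact R₀
  -- measure preserving
  have hmp : MeasurePreserving eL volume volume := by
    have : ⇑eL = ⇑(MeasurableEquiv.toLp 2 (Fin (n+1) → ℝ)).symm := rfl
    exact this ▸ EuclideanSpace.volume_preserving_symm_measurableEquiv_toLp _
  -- ae equality of fund and Icc
  have hfund_pre : fund (n+1) R₀ = eL ⁻¹' (univ.pi fun _ => Ico (0:ℝ) R₀) := by
    ext x; simp only [fund, mem_setOf_eq, mem_preimage, mem_univ_pi]; exact Iff.rfl
  have hIcc_pre : (Icc (0 : EuclideanSpace ℝ (Fin (n+1))) b : Set _) =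
      eL ⁻¹' (univ.pi fun _ => Icc (0:ℝ) R₀) := by
    rw [hIccSet, ← pi_univ_Icc]
    rfl
  have hμf : volume (fund (n+1) R₀) = (ENNReal.ofReal R₀) ^ (n+1) := by
    rw [hfund_pre, hmp.measure_preimage (MeasurableSet.univ_pi fun _ =>
      measurableSet_Ico).nullMeasurableSet, volume_pi_pi]
    simp [Real.volume_Ico]
  have hμI : volume (Icc (0 : EuclideanSpace ℝ (Fin (n+1))) b) = (ENNReal.ofReal R₀) ^ (n+1) := by
    rw [hIcc_pre, hmp.measure_preimage (MeasurableSet.univ_pi fun _ =>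
      measurableSet_Icc).nullMeasurableSet, volume_pi_pi]
    simp [Real.volume_Icc]
  have hsub : fund (n+1) R₀ ⊆ Icc (0 : EuclideanSpace ℝ (Fin (n+1))) b := by
    rw [hfund_pre, hIcc_pre]
    intro x hx
    simp only [mem_preimage, mem_univ_pi] at hx ⊢
    exact fun i => ⟨(hx i).1, (hx i).2.le⟩
  have haeeq : fund (n+1) R₀ =ᵐ[(volume : Measure (EuclideanSpace ℝ (Fin (n+1))))]
      Icc (0 : EuclideanSpace ℝ (Fin (n+1))) b := by
    rw [MeasureTheory.ae_eq_set]
    constructor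
    · rw [diff_eq_empty.2 hsub]; exact measure_empty
    · rw [measure_diff hsub (fund_measurable R₀).nullMeasurableSet
        (by rw [hμf]; exact ENNReal.pow_ne_top ENNReal.ofReal_ne_top), hμf, hμI, tsub_self]
  rw [setIntegral_congr_set haeeq]
  have hle : (0 : EuclideanSpace ℝ (Fin (n+1))) ≤ b := by
    intro i
    show (0:ℝ) ≤ R₀
    exact hR.le
  have hsingle : ∀ i : Fin (n+1), eL.symm (Pi.single i (1:ℝ)) = EuclideanSpace.single i 1 := by
    intro i; rfl
  have key := integral_divergence_of_hasFDerivAt_off_countable_of_equiv eL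
    (fun _ _ => Iff.rfl) hmp φ (fun i x => φ' i x) ∅ countable_empty 0 b hle
    (fun i => (hφc i).continuousOn)
    (fun x _ i => hφd i x)
    (fun x => ∑ i, φ' i x (ee (n+1) i))
    (fun x => by
      refine Finset.sum_congr rfl fun i _ => ?_
      rw [hsingle])
    (hdivc.continuousOn.integrableOn_compact hIccCompact)
  rw [key]
  refine Finset.sum_eq_zero fun i _ => ?_
  rw [sub_eq_zero]
  refine setIntegral_congr_fun (by measurability) fun y _ => ?_
  have hpt : eL.symm (i.insertNth (eL b i) y) =
      eL.symm (i.insertNth (eL 0 i) y) + R₀ • EuclideanSpace.single i 1 := by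
    apply eL.injective
    simp only [map_add, eL.apply_symm_apply, eL.map_smul, heLb, heL0]
    funext j
    rcases eq_or_ne j i with rfl | hne
    · simp only [Fin.insertNth_apply_same, Pi.add_apply, Pi.smul_apply]
      show R₀ = (0:ℝ) + R₀ • (EuclideanSpace.single j (1:ℝ)) j
      simp
    · rcases Fin.exists_succAbove_eq hne with ⟨k, rfl⟩
      simp only [Fin.insertNth_apply_succAbove, Pi.add_apply, Pi.smul_apply]
      show y k = y k + R₀ • (EuclideanSpace.single i (1:ℝ)) (i.succAbove k)
      simp [Fin.succAbove_ne i k]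
  rw [hpt, hper i i _]


/-- ground-state transform identity for the landscape function:
`∫_Ω |∇f|² + V f² = ∫_Ω u² |∇(f/u)|² + f²/u` for periodic `f`. -/
theorem landscape_ground_state_identity (d : ℕ) (hd : 0 < d) (R₀ : ℕ) (hR : 0 < R₀)
    (V u f : EuclideanSpace ℝ (Fin d) → ℝ)
    (hVmeas : Measurable V) (hV0 : ∀ x, 0 ≤ V x) (hVbd : ∃ M, ∀ x, V x ≤ M)
    (hVper : IsPeriodic (R₀ : ℝ) V)
    (hu : ContDiff ℝ 2 u) (huper : IsPeriodic (R₀ : ℝ) u) (hupos : ∀ x, 0 < u x)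
    (hueq : ∀ x, -lap u x + V x * u x = 1)
    (hf : ContDiff ℝ 1 f) (hfper : IsPeriodic (R₀ : ℝ) f) :
    ∫ x in fund d (R₀ : ℝ), (‖gradient f x‖ ^ 2 + V x * f x ^ 2) =
      ∫ x in fund d (R₀ : ℝ),
        (u x ^ 2 * ‖gradient (fun y => f y / u y) x‖ ^ 2 + f x ^ 2 / u x) := by
  obtain ⟨n, rfl⟩ : ∃ n, d = n + 1 := ⟨d - 1, (Nat.succ_pred_eq_of_pos hd).symm⟩
  have hRpos : (0 : ℝ) < (R₀ : ℝ) := by exact_mod_cast hR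
  have hune : ∀ y, u y ≠ 0 := fun y => (hupos y).ne'
  set w : EuclideanSpace ℝ (Fin (n+1)) → ℝ := fun y => f y / u y with hwdef
  set g : EuclideanSpace ℝ (Fin (n+1)) → ℝ := fun y => f y ^ 2 / u y with hgdef
  set ψ : Fin (n+1) → EuclideanSpace ℝ (Fin (n+1)) → ℝ :=
    fun i y => fderiv ℝ u y (ee (n+1) i) with hψdef
  set φ : Fin (n+1) → EuclideanSpace ℝ (Fin (n+1)) → ℝ :=
    fun i y => g y * ψ i y with hφdef
  set φ' : Fin (n+1) → EuclideanSpace ℝ (Fin (n+1)) →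
      EuclideanSpace ℝ (Fin (n+1)) →L[ℝ] ℝ :=
    fun i x => g x • fderiv ℝ (ψ i) x + ψ i x • fderiv ℝ g x with hφ'def
  -- smoothness
  have hu1 : ContDiff ℝ 1 u := hu.of_le one_le_two
  have hud : Differentiable ℝ u := hu1.differentiable one_ne_zero
  have hfd : Differentiable ℝ f := hf.differentiable one_ne_zero
  have hw1 : ContDiff ℝ 1 w := hf.div hu1 hune
  have hwd : Differentiable ℝ w := hw1.differentiable one_ne_zero
  have hg1 : ContDiff ℝ 1 g := (hf.pow 2).div hu1 hune
  have hgd : Differentiable ℝ g := hg1.differentiable one_ne_zero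
  have hψ1 : ∀ i, ContDiff ℝ 1 (ψ i) := by
    intro i
    have h2 : ContDiff ℝ 1 (fderiv ℝ u) := hu.fderiv_right (by norm_num)
    exact (ContinuousLinearMap.apply ℝ ℝ (ee (n+1) i)).contDiff.comp h2
  have hψd : ∀ i, Differentiable ℝ (ψ i) := fun i => (hψ1 i).differentiable one_ne_zero
  have hφd : ∀ i x, HasFDerivAt (φ i) (φ' i x) x := fun i x =>
    (hgd x).hasFDerivAt.mul ((hψd i) x).hasFDerivAt
  have hφc : ∀ i, Continuous (φ i) := fun i => hg1.continuous.mul (hψ1 i).continuous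
  -- periodicity
  have hgper : IsPeriodic (R₀ : ℝ) g := fun x j => by
    simp only [hgdef]; rw [hfper x j, huper x j]
  have hψper : ∀ i, IsPeriodic (R₀ : ℝ) (ψ i) := fun i x j => by
    simp only [hψdef]; rw [fderiv_periodic u hud huper x j]
  have hφper : ∀ i j x, φ i (x + (R₀ : ℝ) • EuclideanSpace.single j 1) = φ i x := by
    intro i j x
    simp only [hφdef]
    rw [hgper x j, hψper i x j]
  -- continuity of the divergence
  have hc_fderiv_w : Continuous (fderiv ℝ w) := hw1.continuous_fderiv one_ne_zero
  have hc_fderiv_g : Continuous (fderiv ℝ g) := hg1.continuous_fderiv one_ne_zero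
  have hc_fderiv_ψ : ∀ i, Continuous (fderiv ℝ (ψ i)) := fun i =>
    (hψ1 i).continuous_fderiv one_ne_zero
  have happly : ∀ (v : EuclideanSpace ℝ (Fin (n+1)))
      (F : EuclideanSpace ℝ (Fin (n+1)) → EuclideanSpace ℝ (Fin (n+1)) →L[ℝ] ℝ),
      Continuous F → Continuous fun x => F x v := fun v F hF =>
    (ContinuousLinearMap.apply ℝ ℝ v).continuous.comp hF
  have hdivc : Continuous fun x => ∑ i, φ' i x (ee (n+1) i) := by
    refine continuous_finset_sum _ fun i _ => ?_
    simp only [hφ'def, ContinuousLinearMap.add_apply, ContinuousLinearMap.coe_smul',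
      Pi.smul_apply, smul_eq_mul]
    exact (hg1.continuous.mul (happly _ _ (hc_fderiv_ψ i))).add
      ((hψ1 i).continuous.mul (happly _ _ hc_fderiv_g))
  -- pointwise identity
  have key : ∀ x, ‖gradient f x‖ ^ 2 + V x * f x ^ 2 =
      (u x ^ 2 * ‖gradient w x‖ ^ 2 + f x ^ 2 / u x) + ∑ i, φ' i x (ee (n+1) i) := by
    intro x
    have hfx : ∀ y, f y = u y * w y := fun y => by
      simp only [hwdef]
      rw [mul_comm, div_mul_cancel₀ _ (hune y)]
    have hfuw : f = fun y => u y * w y := funext hfx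
    have hgwf : g = fun y => w y * f y := funext fun y => by
      simp only [hgdef, hwdef]
      rw [div_mul_eq_mul_div, ← sq]
    have hDf : ∀ i, fderiv ℝ f x (ee (n+1) i) =
        u x * fderiv ℝ w x (ee (n+1) i) + w x * fderiv ℝ u x (ee (n+1) i) := by
      intro i
      conv_lhs => rw [hfuw, fderiv_fun_mul (hud x) (hwd x)]
      simp [smul_eq_mul]
    have hDg : ∀ i, fderiv ℝ g x (ee (n+1) i) =
        w x * fderiv ℝ f x (ee (n+1) i) + f x * fderiv ℝ w x (ee (n+1) i) := by
      intro i
      conv_lhs => rw [hgwf, fderiv_fun_mul (hwd x) (hfd x)]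
      simp [smul_eq_mul]
    have hdivx : ∑ i, φ' i x (ee (n+1) i) =
        g x * lap u x + ∑ i, fderiv ℝ u x (ee (n+1) i) * fderiv ℝ g x (ee (n+1) i) := by
      simp only [hφ'def, ContinuousLinearMap.add_apply, ContinuousLinearMap.coe_smul',
        Pi.smul_apply, smul_eq_mul, hψdef, lap]
      rw [Finset.sum_add_distrib, Finset.mul_sum]
    have hlap : lap u x = V x * u x - 1 := by linarith [hueq x]
    rw [norm_gradient_sq, norm_gradient_sq, hdivx, hlap]
    have hterm : ∀ i ∈ Finset.univ, (fderiv ℝ f x (ee (n+1) i)) ^ 2 =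
        u x ^ 2 * (fderiv ℝ w x (ee (n+1) i)) ^ 2 +
        fderiv ℝ u x (ee (n+1) i) * fderiv ℝ g x (ee (n+1) i) := by
      intro i _
      rw [hDg i, hDf i, hfx x]
      ring
    rw [Finset.sum_congr rfl hterm, Finset.sum_add_distrib, ← Finset.mul_sum]
    have hgu : g x * u x = f x ^ 2 := by
      simp only [hgdef]
      rw [div_mul_cancel₀ _ (hune x)]
    have hgeq : g x = f x ^ 2 / u x := rfl
    have : g x * (V x * u x - 1) = V x * (g x * u x) - g x := by ring
    rw [this, hgu, hgeq]
    ring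
  -- assemble integrals
  calc ∫ x in fund (n+1) (R₀ : ℝ), (‖gradient f x‖ ^ 2 + V x * f x ^ 2)
      = ∫ x in fund (n+1) (R₀ : ℝ), ((u x ^ 2 * ‖gradient w x‖ ^ 2 + f x ^ 2 / u x) +
          ∑ i, φ' i x (ee (n+1) i)) := by
        exact integral_congr_ae (Filter.Eventually.of_forall fun x => key x)
    _ = (∫ x in fund (n+1) (R₀ : ℝ), (u x ^ 2 * ‖gradient w x‖ ^ 2 + f x ^ 2 / u x)) +
        ∫ x in fund (n+1) (R₀ : ℝ), ∑ i, φ' i x (ee (n+1) i) := by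
        refine integral_add ?_ ?_
        · refine integrableOn_fund ?_
          have : (fun x => u x ^ 2 * ‖gradient w x‖ ^ 2 + f x ^ 2 / u x) =
              fun x => u x ^ 2 * (∑ i, (fderiv ℝ w x (ee (n+1) i)) ^ 2) + f x ^ 2 / u x := by
            funext x; rw [norm_gradient_sq]
          rw [this]
          refine (((hu1.continuous.pow 2).mul ?_).add
            ((hf.continuous.pow 2).div hu1.continuous hune))
          exact continuous_finset_sum _ fun i _ => (happly _ _ hc_fderiv_w).pow 2
        · exact integrableOn_fund hdivc
    _ = ∫ x in fund (n+1) (R₀ : ℝ), (u x ^ 2 * ‖gradient w x‖ ^ 2 + f x ^ 2 / u x) := by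
        rw [div_integral_zero n (R₀ : ℝ) hRpos φ φ' hφd hφc hdivc hφper, add_zero]
end

section
/- Let Ω be the torus, V ≥ 0 bounded, and u the landscape solving -Δu + Vu = 1 with periodic boundary conditions. Then for every periodic f ∈ W^{1,2}(Ω): ∫_Ω |∇f|² + V f² dx ≥ ∫_Ω (1/u) f² dx. -/
open MeasureTheory Set

/-! ### Auxiliary material for the landscape inequality -/

namespace LandscapeAux

variable {d : ℕ}

lemma gradsq (f : EuclideanSpace ℝ (Fin d) → ℝ) (x : EuclideanSpace ℝ (Fin d)) :
    ‖gradient f x‖ ^ 2 = ∑ i : Fin d, (fderiv ℝ f x (EuclideanSpace.single i 1)) ^ 2 := by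
  have h : ∀ i, (gradient f x) i = fderiv ℝ f x (EuclideanSpace.single i 1) := by
    intro i
    have h2 : @inner ℝ _ _ (gradient f x) (EuclideanSpace.single i (1:ℝ)) = (gradient f x) i := by
      rw [EuclideanSpace.inner_single_right]; simp
    rw [← h2]
    exact InnerProductSpace.toDual_symm_apply
  rw [← real_inner_self_eq_norm_sq]
  rw [PiLp.inner_apply]; simp [RCLike.inner_apply, h, sq]

lemma fderiv_periodic {Q : Type*} [NormedAddCommGroup Q] [NormedSpace ℝ Q] (u : Q → ℝ)
    (hu : Differentiable ℝ u) (c : Q) (h : ∀ y, u (y + c) = u y) (z : Q) :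
    fderiv ℝ u (z + c) = fderiv ℝ u z := by
  have ht : HasFDerivAt (fun y : Q => y + c) (ContinuousLinearMap.id ℝ Q) z :=
    (hasFDerivAt_id z).add_const c
  have h2 : HasFDerivAt (fun y => u (y + c)) ((fderiv ℝ u (z + c)).comp
      (ContinuousLinearMap.id ℝ Q)) z := (hu (z + c)).hasFDerivAt.comp z ht
  have h3 : HasFDerivAt u ((fderiv ℝ u (z + c)).comp (ContinuousLinearMap.id ℝ Q)) z := by
    simpa only [funext h] using h2
  have h4 := h3.fderiv
  rw [h4]; ext v; simp

lemma insertNth_eq_add (n : ℕ) (R : ℝ) (i : Fin (n+1)) (y : Fin n → ℝ) :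
    Fin.insertNth (α := fun _ => ℝ) i R y
      = Fin.insertNth (α := fun _ => ℝ) i (0:ℝ) y + R • (Pi.single i 1 : Fin (n+1) → ℝ) := by
  funext j
  rcases eq_or_ne j i with rfl | hj
  · simp
  · rcases Fin.exists_succAbove_eq hj with ⟨k, rfl⟩
    simp [Fin.insertNth_apply_succAbove, Pi.single_eq_of_ne (Fin.succAbove_ne i k)]

lemma ptwise_alg (ai bi fv uv : ℝ) (hne : uv ≠ 0) :
    bi * ((fv * fv) * (-(uv ^ 2)⁻¹ * bi) + uv⁻¹ * (fv * ai + fv * ai)) ≤ ai ^ 2 := by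
  have key : ai ^ 2 - bi * ((fv * fv) * (-(uv ^ 2)⁻¹ * bi) + uv⁻¹ * (fv * ai + fv * ai))
      = (ai - fv / uv * bi) ^ 2 := by
    field_simp
    ring
  nlinarith [sq_nonneg (ai - fv / uv * bi)]

variable (u f : EuclideanSpace ℝ (Fin d) → ℝ)

/-- The vector-field component `G i = (f²/u) ∂ᵢu`. -/
noncomputable def G (i : Fin d) (y : EuclideanSpace ℝ (Fin d)) : ℝ :=
  f y * f y * (u y)⁻¹ * (fderiv ℝ u y (EuclideanSpace.single i 1))

/-- The derivative of `G i`. -/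
noncomputable def Dg (i : Fin d) (z : EuclideanSpace ℝ (Fin d)) :
    EuclideanSpace ℝ (Fin d) →L[ℝ] ℝ :=
  (f z * f z * (u z)⁻¹) • fderiv ℝ (fun y => fderiv ℝ u y (EuclideanSpace.single i 1)) z
    + (fderiv ℝ u z (EuclideanSpace.single i 1)) •
      ((f z * f z) • ((-(u z ^ 2)⁻¹) • fderiv ℝ u z)
        + (u z)⁻¹ • (f z • fderiv ℝ f z + f z • fderiv ℝ f z))

/-- The divergence of the vector field `G`. -/
noncomputable def divE (z : EuclideanSpace ℝ (Fin d)) : ℝ :=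
  ∑ i, Dg u f i z (EuclideanSpace.single i 1)

variable {u f}
variable (hu : ContDiff ℝ 2 u) (hf : ContDiff ℝ 1 f) (hupos : ∀ x, 0 < u x)

section

include hu hf hupos

lemma hasFDerivAt_G (i : Fin d) (z : EuclideanSpace ℝ (Fin d)) :
    HasFDerivAt (G u f i) (Dg u f i z) z := by
  have hfd : DifferentiableAt ℝ f z := (hf.differentiable one_ne_zero) z
  have hud : DifferentiableAt ℝ u z := (hu.differentiable two_ne_zero) z
  have hu1 : ContDiff ℝ 1 (fun y => fderiv ℝ u y (EuclideanSpace.single i 1)) :=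
    (hu.fderiv_right (by norm_num)).clm_apply contDiff_const
  have h1 : HasFDerivAt (fun y => f y * f y) (f z • fderiv ℝ f z + f z • fderiv ℝ f z) z :=
    hfd.hasFDerivAt.mul hfd.hasFDerivAt
  have h2 : HasFDerivAt (fun y => (u y)⁻¹) ((-(u z ^ 2)⁻¹) • fderiv ℝ u z) z :=
    (hasDerivAt_inv (hupos z).ne').comp_hasFDerivAt z hud.hasFDerivAt
  exact (h1.mul h2).mul (((hu1.differentiable one_ne_zero) z).hasFDerivAt)

end

lemma Dg_val (i : Fin d) (z : EuclideanSpace ℝ (Fin d)) :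
    Dg u f i z (EuclideanSpace.single i 1)
      = (f z * f z * (u z)⁻¹) *
          (fderiv ℝ (fun y => fderiv ℝ u y (EuclideanSpace.single i 1)) z
            (EuclideanSpace.single i 1))
        + (fderiv ℝ u z (EuclideanSpace.single i 1)) *
          ((f z * f z) * (-(u z ^ 2)⁻¹ * (fderiv ℝ u z (EuclideanSpace.single i 1)))
            + (u z)⁻¹ * (f z * (fderiv ℝ f z (EuclideanSpace.single i 1))
              + f z * (fderiv ℝ f z (EuclideanSpace.single i 1)))) := by
  simp only [Dg, ContinuousLinearMap.add_apply, ContinuousLinearMap.smul_apply, smul_eq_mul]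

include hu hf hupos in
lemma divE_continuous : Continuous (divE u f) := by
  have hune : ∀ z, u z ≠ 0 := fun z => (hupos z).ne'
  have hfc : Continuous f := hf.continuous
  have huc : Continuous u := hu.continuous
  have hinv : Continuous fun z => (u z)⁻¹ := huc.inv₀ hune
  have hAc : ∀ i : Fin d, Continuous fun z => fderiv ℝ f z (EuclideanSpace.single i 1) :=
    fun i => (hf.continuous_fderiv one_ne_zero).clm_apply continuous_const
  have hBc : ∀ i : Fin d, Continuous fun z => fderiv ℝ u z (EuclideanSpace.single i 1) :=
    fun i => (hu.continuous_fderiv two_ne_zero).clm_apply continuous_const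
  have hSc : ∀ i : Fin d, Continuous fun z =>
      fderiv ℝ (fun y => fderiv ℝ u y (EuclideanSpace.single i 1)) z
        (EuclideanSpace.single i 1) := by
    intro i
    have hu1 : ContDiff ℝ 1 (fun y => fderiv ℝ u y (EuclideanSpace.single i 1)) :=
      (hu.fderiv_right (by norm_num)).clm_apply contDiff_const
    exact (hu1.continuous_fderiv one_ne_zero).clm_apply continuous_const
  have : divE u f = fun z => ∑ i, ((f z * f z * (u z)⁻¹) *
          (fderiv ℝ (fun y => fderiv ℝ u y (EuclideanSpace.single i 1)) z
            (EuclideanSpace.single i 1))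
        + (fderiv ℝ u z (EuclideanSpace.single i 1)) *
          ((f z * f z) * (-(u z ^ 2)⁻¹ * (fderiv ℝ u z (EuclideanSpace.single i 1)))
            + (u z)⁻¹ * (f z * (fderiv ℝ f z (EuclideanSpace.single i 1))
              + f z * (fderiv ℝ f z (EuclideanSpace.single i 1))))) := by
    funext z
    exact Finset.sum_congr rfl fun i _ => Dg_val i z
  rw [this]
  refine continuous_finset_sum _ fun i _ => ?_
  have hnegc : Continuous fun z => -(u z ^ 2)⁻¹ :=
    ((huc.pow 2).inv₀ (fun z => pow_ne_zero 2 (hune z))).neg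
  exact (((hfc.mul hfc).mul hinv).mul (hSc i)).add
    ((hBc i).mul (((hfc.mul hfc).mul (hnegc.mul (hBc i))).add
      (hinv.mul ((hfc.mul (hAc i)).add (hfc.mul (hAc i))))))

end LandscapeAux

set_option maxHeartbeats 1000000 in
/-- the landscape inequality
`∫_Ω |∇f|² + V f² ≥ ∫_Ω (1/u) f²` for periodic `f`. -/
theorem landscape_uncertainty_principle (d : ℕ) (hd : 0 < d) (R₀ : ℕ) (hR : 0 < R₀)
    (V u f : EuclideanSpace ℝ (Fin d) → ℝ)
    (hVmeas : Measurable V) (hV0 : ∀ x, 0 ≤ V x) (hVbd : ∃ M, ∀ x, V x ≤ M)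
    (hVper : IsPeriodic (R₀ : ℝ) V)
    (hu : ContDiff ℝ 2 u) (huper : IsPeriodic (R₀ : ℝ) u) (hupos : ∀ x, 0 < u x)
    (hueq : ∀ x, -lap u x + V x * u x = 1)
    (hf : ContDiff ℝ 1 f) (hfper : IsPeriodic (R₀ : ℝ) f) :
    ∫ x in fund d (R₀ : ℝ), (1 / u x) * f x ^ 2 ≤
      ∫ x in fund d (R₀ : ℝ), (‖gradient f x‖ ^ 2 + V x * f x ^ 2) := by
  obtain ⟨n, rfl⟩ : ∃ n, d = n + 1 := ⟨d - 1, (Nat.succ_pred_eq_of_pos hd).symm⟩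
  open LandscapeAux in
  have hRpos : (0:ℝ) < (R₀ : ℝ) := by exact_mod_cast hR
  have hfd : Differentiable ℝ f := hf.differentiable one_ne_zero
  have hud : Differentiable ℝ u := hu.differentiable two_ne_zero
  have hfc : Continuous f := hf.continuous
  have huc : Continuous u := hu.continuous
  have hune : ∀ z, u z ≠ 0 := fun z => (hupos z).ne'
  have hdivc : Continuous (LandscapeAux.divE u f) :=
    LandscapeAux.divE_continuous hu hf hupos
  -- the pointwise key inequality
  have hkey : ∀ z, 1 / u z * f z ^ 2 + LandscapeAux.divE u f z
      ≤ ‖gradient f z‖ ^ 2 + V z * f z ^ 2 := by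
    intro z
    rw [LandscapeAux.gradsq]
    have hlapz : ∑ i : Fin (n+1),
        fderiv ℝ (fun y => fderiv ℝ u y (EuclideanSpace.single i 1)) z
          (EuclideanSpace.single i 1) = V z * u z - 1 := by
      have h0 := hueq z
      have h1 : lap u z = ∑ i : Fin (n+1),
          fderiv ℝ (fun y => fderiv ℝ u y (EuclideanSpace.single i 1)) z
            (EuclideanSpace.single i 1) := rfl
      linarith [h1.symm.le, h1.le]
    have e1 : 1 / u z * f z ^ 2 + LandscapeAux.divE u f z
        = V z * f z ^ 2 + ∑ i : Fin (n+1),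
            ((fderiv ℝ u z (EuclideanSpace.single i 1)) *
              ((f z * f z) * (-(u z ^ 2)⁻¹ * (fderiv ℝ u z (EuclideanSpace.single i 1)))
                + (u z)⁻¹ * (f z * (fderiv ℝ f z (EuclideanSpace.single i 1))
                  + f z * (fderiv ℝ f z (EuclideanSpace.single i 1))))) := by
      have hsum : LandscapeAux.divE u f z = ∑ i : Fin (n+1), ((f z * f z * (u z)⁻¹) *
            (fderiv ℝ (fun y => fderiv ℝ u y (EuclideanSpace.single i 1)) z
              (EuclideanSpace.single i 1))
          + (fderiv ℝ u z (EuclideanSpace.single i 1)) *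
            ((f z * f z) * (-(u z ^ 2)⁻¹ * (fderiv ℝ u z (EuclideanSpace.single i 1)))
              + (u z)⁻¹ * (f z * (fderiv ℝ f z (EuclideanSpace.single i 1))
                + f z * (fderiv ℝ f z (EuclideanSpace.single i 1))))) :=
        Finset.sum_congr rfl fun i _ => LandscapeAux.Dg_val i z
      rw [hsum, Finset.sum_add_distrib, ← Finset.mul_sum, hlapz]
      have hz := hune z
      linear_combination (f z * f z * V z) * mul_inv_cancel₀ hz
    rw [e1, add_comm (∑ i : Fin (n+1), (fderiv ℝ f z (EuclideanSpace.single i 1)) ^ 2)]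
    gcongr with i _
    exact LandscapeAux.ptwise_alg _ _ _ _ (hune z)
  -- geometric setup
  have hKcomp : IsCompact ((EuclideanSpace.equiv (Fin (n+1)) ℝ).symm ''
      Icc (0 : Fin (n+1) → ℝ) (fun _ => (R₀:ℝ))) :=
    (isCompact_Icc).image (EuclideanSpace.equiv (Fin (n+1)) ℝ).symm.continuous
  have hfundK : fund (n+1) (R₀:ℝ) ⊆ (EuclideanSpace.equiv (Fin (n+1)) ℝ).symm ''
      Icc (0 : Fin (n+1) → ℝ) (fun _ => (R₀:ℝ)) := by
    intro x hx
    refine ⟨EuclideanSpace.equiv (Fin (n+1)) ℝ x, ?_, by simp⟩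
    constructor
    · intro i; exact (hx i).1
    · intro i; exact le_of_lt (hx i).2
  have hfundmeas : MeasurableSet (fund (n+1) (R₀:ℝ)) := by
    have : fund (n+1) (R₀:ℝ) = ⋂ i, (fun x : EuclideanSpace ℝ (Fin (n+1)) => x i) ⁻¹'
        Ico (0:ℝ) (R₀:ℝ) := by
      ext x; simp [fund, Set.mem_iInter]
    rw [this]
    exact MeasurableSet.iInter fun i =>
      (((continuous_apply i).comp
        (EuclideanSpace.equiv (Fin (n+1)) ℝ).continuous).measurable) measurableSet_Ico
  have hfundfin : volume (fund (n+1) (R₀:ℝ)) ≠ ⊤ :=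
    ((measure_mono hfundK).trans_lt hKcomp.measure_lt_top).ne
  -- integrability
  have hcont1 : Continuous fun z => 1 / u z * f z ^ 2 :=
    (continuous_const.div huc hune).mul (hfc.pow 2)
  have I1 : IntegrableOn (fun z => 1 / u z * f z ^ 2 + LandscapeAux.divE u f z)
      (fund (n+1) (R₀:ℝ)) :=
    (((hcont1.add hdivc).continuousOn).integrableOn_compact hKcomp).mono_set hfundK
  have I1a : IntegrableOn (fun z => 1 / u z * f z ^ 2) (fund (n+1) (R₀:ℝ)) :=
    ((hcont1.continuousOn).integrableOn_compact hKcomp).mono_set hfundK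
  have I1b : IntegrableOn (LandscapeAux.divE u f) (fund (n+1) (R₀:ℝ)) :=
    ((hdivc.continuousOn).integrableOn_compact hKcomp).mono_set hfundK
  have hgradc : Continuous fun z => ‖gradient f z‖ ^ 2 := by
    have : Continuous fun z => gradient f z :=
      (InnerProductSpace.toDual ℝ _).symm.continuous.comp (hf.continuous_fderiv one_ne_zero)
    exact this.norm.pow 2
  obtain ⟨M, hM⟩ := hVbd
  obtain ⟨Cf, hCf⟩ := hKcomp.exists_bound_of_continuousOn hfc.continuousOn
  have I2b : IntegrableOn (fun z => V z * f z ^ 2) (fund (n+1) (R₀:ℝ)) := by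
    refine Measure.integrableOn_of_bounded (M := M * Cf ^ 2) hfundfin
      ((hVmeas.mul (hfc.measurable.pow_const 2)).aestronglyMeasurable) ?_
    rw [ae_restrict_iff' hfundmeas]
    refine ae_of_all _ fun x hx => ?_
    have h1 : ‖f x‖ ≤ Cf := hCf x (hfundK hx)
    have h2 : f x ^ 2 ≤ Cf ^ 2 := by
      rw [← sq_abs]
      have habs : |f x| ≤ Cf := by rwa [Real.norm_eq_abs] at h1
      exact pow_le_pow_left₀ (abs_nonneg _) habs 2
    have h3 : (0:ℝ) ≤ f x ^ 2 := sq_nonneg _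
    have h4 : (0:ℝ) ≤ V x := hV0 x
    rw [Real.norm_eq_abs, abs_of_nonneg (mul_nonneg h4 h3)]
    exact mul_le_mul (hM x) h2 h3 (h4.trans (hM x))
  have I2 : IntegrableOn (fun z => ‖gradient f z‖ ^ 2 + V z * f z ^ 2)
      (fund (n+1) (R₀:ℝ)) :=
    (((hgradc.continuousOn).integrableOn_compact hKcomp).mono_set hfundK).add I2b
  -- the divergence integrates to zero
  have hdiv0 : ∫ x in fund (n+1) (R₀:ℝ), LandscapeAux.divE u f x = 0 := by
    have hmp : MeasurePreserving (MeasurableEquiv.toLp 2 (Fin (n+1) → ℝ)) :=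
      (EuclideanSpace.volume_preserving_symm_measurableEquiv_toLp (Fin (n+1))).symm
    have himg : (MeasurableEquiv.toLp 2 (Fin (n+1) → ℝ)) ''
        (Set.pi univ fun _ : Fin (n+1) => Ico (0:ℝ) (R₀:ℝ)) = fund (n+1) (R₀:ℝ) := by
      rw [MeasurableEquiv.image_eq_preimage_symm]
      ext x
      simp only [mem_preimage, Set.mem_pi, mem_univ, forall_true_left, fund, mem_setOf_eq]
      rfl
    have htrans : ∫ x in fund (n+1) (R₀:ℝ), LandscapeAux.divE u f x
        = ∫ p in Icc (0 : Fin (n+1) → ℝ) (fun _ => (R₀:ℝ)),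
            LandscapeAux.divE u f ((MeasurableEquiv.toLp 2 (Fin (n+1) → ℝ)) p) := by
      rw [← himg, hmp.setIntegral_image_emb (MeasurableEquiv.measurableEmbedding _)]
      exact setIntegral_congr_set MeasureTheory.Measure.univ_pi_Ico_ae_eq_Icc
    rw [htrans]
    have hle : (0 : Fin (n+1) → ℝ) ≤ (fun _ => (R₀:ℝ)) := fun i => le_of_lt hRpos
    have hGc : ∀ i : Fin (n+1), Continuous (LandscapeAux.G u f i) := by
      intro i
      exact ((hfc.mul hfc).mul (huc.inv₀ hune)).mul
        ((hu.continuous_fderiv two_ne_zero).clm_apply continuous_const)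
    have hφc : Continuous fun p : Fin (n+1) → ℝ =>
        (EuclideanSpace.equiv (Fin (n+1)) ℝ).symm p :=
      (EuclideanSpace.equiv (Fin (n+1)) ℝ).symm.continuous
    have HcF : ContinuousOn (fun p i => LandscapeAux.G u f i
        ((EuclideanSpace.equiv (Fin (n+1)) ℝ).symm p))
        (Icc (0 : Fin (n+1) → ℝ) (fun _ => (R₀:ℝ))) :=
      (continuous_pi fun i => (hGc i).comp hφc).continuousOn
    have HdF : ∀ x ∈ (Set.pi univ fun i => Ioo ((0:Fin (n+1) → ℝ) i)
          ((fun _ => (R₀:ℝ)) i)) \ (∅ : Set (Fin (n+1) → ℝ)),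
        HasFDerivAt (fun p i => LandscapeAux.G u f i
            ((EuclideanSpace.equiv (Fin (n+1)) ℝ).symm p))
          (ContinuousLinearMap.pi (fun i => (LandscapeAux.Dg u f i
              ((EuclideanSpace.equiv (Fin (n+1)) ℝ).symm x)).comp
            ((EuclideanSpace.equiv (Fin (n+1)) ℝ).symm :
              (Fin (n+1) → ℝ) →L[ℝ] EuclideanSpace ℝ (Fin (n+1))))) x := by
      intro x _
      apply hasFDerivAt_pi''
      intro i
      rw [ContinuousLinearMap.proj_pi]
      have hcomp := (LandscapeAux.hasFDerivAt_G hu hf hupos i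
          ((EuclideanSpace.equiv (Fin (n+1)) ℝ).symm x)).comp x
        ((EuclideanSpace.equiv (Fin (n+1)) ℝ).symm.hasFDerivAt (x := x))
      simpa [Function.comp_def] using hcomp
    have hdiveq : (fun x => ∑ i, (ContinuousLinearMap.pi (fun i => (LandscapeAux.Dg u f i
            ((EuclideanSpace.equiv (Fin (n+1)) ℝ).symm x)).comp
          ((EuclideanSpace.equiv (Fin (n+1)) ℝ).symm :
            (Fin (n+1) → ℝ) →L[ℝ] EuclideanSpace ℝ (Fin (n+1)))))
          (Pi.single i 1) i)
        = fun x => LandscapeAux.divE u f ((EuclideanSpace.equiv (Fin (n+1)) ℝ).symm x) := by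
      funext x
      simp only [ContinuousLinearMap.pi_apply, ContinuousLinearMap.comp_apply,
        LandscapeAux.divE]
      rfl
    have HiF : IntegrableOn (fun x => ∑ i, (ContinuousLinearMap.pi
          (fun i => (LandscapeAux.Dg u f i
            ((EuclideanSpace.equiv (Fin (n+1)) ℝ).symm x)).comp
          ((EuclideanSpace.equiv (Fin (n+1)) ℝ).symm :
            (Fin (n+1) → ℝ) →L[ℝ] EuclideanSpace ℝ (Fin (n+1)))))
          (Pi.single i 1) i)
        (Icc (0 : Fin (n+1) → ℝ) (fun _ => (R₀:ℝ))) := by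
      rw [hdiveq]
      exact ((hdivc.comp hφc).continuousOn).integrableOn_compact isCompact_Icc
    have hthm := MeasureTheory.integral_divergence_of_hasFDerivAt_off_countable
      (0 : Fin (n+1) → ℝ) (fun _ => (R₀:ℝ)) hle
      (fun p i => LandscapeAux.G u f i ((EuclideanSpace.equiv (Fin (n+1)) ℝ).symm p))
      (fun x => ContinuousLinearMap.pi (fun i => (LandscapeAux.Dg u f i
          ((EuclideanSpace.equiv (Fin (n+1)) ℝ).symm x)).comp
        ((EuclideanSpace.equiv (Fin (n+1)) ℝ).symm :
          (Fin (n+1) → ℝ) →L[ℝ] EuclideanSpace ℝ (Fin (n+1)))))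
      ∅ countable_empty HcF HdF HiF
    -- boundary terms vanish by periodicity
    have hbdry : ∀ i : Fin (n+1), ∀ y : Fin n → ℝ,
        LandscapeAux.G u f i ((EuclideanSpace.equiv (Fin (n+1)) ℝ).symm
            (Fin.insertNth i ((R₀:ℝ)) y))
          = LandscapeAux.G u f i ((EuclideanSpace.equiv (Fin (n+1)) ℝ).symm
            (Fin.insertNth i (0:ℝ) y)) := by
      intro i y
      have hins : Fin.insertNth (α := fun _ => ℝ) i ((R₀:ℝ)) y
          = Fin.insertNth (α := fun _ => ℝ) i (0:ℝ) y
            + (R₀:ℝ) • (Pi.single i 1 : Fin (n+1) → ℝ) :=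
        LandscapeAux.insertNth_eq_add n (R₀:ℝ) i y
      have hper : ∀ z : EuclideanSpace ℝ (Fin (n+1)),
          LandscapeAux.G u f i (z + (R₀:ℝ) • EuclideanSpace.single i 1)
            = LandscapeAux.G u f i z := by
        intro z
        have hfp : f (z + (R₀:ℝ) • EuclideanSpace.single i 1) = f z := hfper z i
        have hup : u (z + (R₀:ℝ) • EuclideanSpace.single i 1) = u z := huper z i
        have hdup : fderiv ℝ u (z + (R₀:ℝ) • EuclideanSpace.single i 1) = fderiv ℝ u z :=
          LandscapeAux.fderiv_periodic u hud _ (fun y => huper y i) z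
        simp [LandscapeAux.G, hfp, hup, hdup]
      have hφadd : (EuclideanSpace.equiv (Fin (n+1)) ℝ).symm
            (Fin.insertNth (α := fun _ => ℝ) i (0:ℝ) y
              + (R₀:ℝ) • (Pi.single i 1 : Fin (n+1) → ℝ))
          = (EuclideanSpace.equiv (Fin (n+1)) ℝ).symm
              (Fin.insertNth (α := fun _ => ℝ) i (0:ℝ) y)
            + (R₀:ℝ) • EuclideanSpace.single i 1 := by
        rw [map_add, _root_.map_smul]
        rfl
      rw [hins, hφadd, hper]
    have hrhszero : ∑ i : Fin (n+1),
        ((∫ x in Icc ((0 : Fin (n+1) → ℝ) ∘ i.succAbove)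
              ((fun _ => (R₀:ℝ)) ∘ i.succAbove),
            (fun p j => LandscapeAux.G u f j ((EuclideanSpace.equiv (Fin (n+1)) ℝ).symm p))
              (i.insertNth ((fun _ => (R₀:ℝ)) i) x) i)
          - ∫ x in Icc ((0 : Fin (n+1) → ℝ) ∘ i.succAbove)
              ((fun _ => (R₀:ℝ)) ∘ i.succAbove),
            (fun p j => LandscapeAux.G u f j ((EuclideanSpace.equiv (Fin (n+1)) ℝ).symm p))
              (i.insertNth ((0 : Fin (n+1) → ℝ) i) x) i) = 0 := by
      refine Finset.sum_eq_zero fun i _ => ?_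
      simp only [hbdry i, Pi.zero_apply]
      exact sub_self _
    have heq : (fun p : Fin (n+1) → ℝ =>
        LandscapeAux.divE u f ((MeasurableEquiv.toLp 2 (Fin (n+1) → ℝ)) p))
        = fun x => ∑ i, (ContinuousLinearMap.pi (fun i => (LandscapeAux.Dg u f i
            ((EuclideanSpace.equiv (Fin (n+1)) ℝ).symm x)).comp
          ((EuclideanSpace.equiv (Fin (n+1)) ℝ).symm :
            (Fin (n+1) → ℝ) →L[ℝ] EuclideanSpace ℝ (Fin (n+1)))))
          (Pi.single i 1) i := by
      have hcoe : ⇑(MeasurableEquiv.toLp 2 (Fin (n+1) → ℝ))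
          = ⇑(EuclideanSpace.equiv (Fin (n+1)) ℝ).symm := rfl
      rw [hdiveq, hcoe]
    rw [heq, hthm, hrhszero]
  -- conclude
  have hmono : ∫ x in fund (n+1) (R₀:ℝ), (1 / u x * f x ^ 2 + LandscapeAux.divE u f x)
      ≤ ∫ x in fund (n+1) (R₀:ℝ), (‖gradient f x‖ ^ 2 + V x * f x ^ 2) :=
    setIntegral_mono_on I1 I2 hfundmeas fun x _ => hkey x
  have hsplit : ∫ x in fund (n+1) (R₀:ℝ), (1 / u x * f x ^ 2 + LandscapeAux.divE u f x)
      = (∫ x in fund (n+1) (R₀:ℝ), 1 / u x * f x ^ 2)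
        + ∫ x in fund (n+1) (R₀:ℝ), LandscapeAux.divE u f x :=
    integral_add I1a I1b
  rw [hsplit, hdiv0, add_zero] at hmono
  exact hmono
end

section
/- Let d ≥ 1 and suppose u is continuous on a cube Q with sidelength l, satisfies -Δu ≤ 1 weakly, u ≥ 1, and for every unit subcube R_j of Q the Harnack bound ⨍_{R_j} u dx ≤ C'_H inf_{R_j} u holds. Let m be the average of u over a ball B ⊇ Q of radius r, let J_η be a set of unit subcubes with inf_{R_j} u < η m where η = (2C'_H)^{-1}, and suppose Card J_η ≥ (λ/2)|Q|. Then sup_{B} u ≥ (1 + c₃λ) m for a dimensional constant c₃ > 0. -/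
open MeasureTheory Set Metric

/-- The unit cube of the lattice `ℤ^d` with corner `j`. -/
def unitCube {d : ℕ} (j : Fin d → ℤ) : Set (EuclideanSpace ℝ (Fin d)) :=
  {x | ∀ i, x i ∈ Ico ((j i : ℝ)) ((j i : ℝ) + 1)}

/-- The cube with corner `a` and sidelength `l`. -/
def cornerCube {d : ℕ} (a : Fin d → ℝ) (l : ℝ) : Set (EuclideanSpace ℝ (Fin d)) :=
  {x | ∀ i, x i ∈ Icc (a i) (a i + l)}

theorem volume_unitCube {d : ℕ} (j : Fin d → ℤ) : volume (unitCube j) = 1 := by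
  have h : unitCube j = (MeasurableEquiv.toLp 2 (Fin d → ℝ)).symm ⁻¹'
      (Set.univ.pi fun i => Ico ((j i : ℝ)) ((j i : ℝ) + 1)) := by
    ext x; simp [unitCube, MeasurableEquiv.toLp]; rfl
  rw [h, (EuclideanSpace.volume_preserving_symm_measurableEquiv_toLp (Fin d)).measure_preimage
    ((MeasurableSet.univ_pi fun i => measurableSet_Ico).nullMeasurableSet)]
  rw [volume_pi_pi]
  simp [Real.volume_Ico]

theorem measurableSet_unitCube {d : ℕ} (j : Fin d → ℤ) : MeasurableSet (unitCube j) := by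
  have h : unitCube j = ⋂ i, (EuclideanSpace.proj (𝕜 := ℝ) i) ⁻¹'
      (Ico ((j i : ℝ)) ((j i : ℝ) + 1)) := by
    ext x; simp [unitCube, EuclideanSpace.proj]
  rw [h]
  exact MeasurableSet.iInter fun i =>
    measurableSet_Ico.preimage (EuclideanSpace.proj (𝕜 := ℝ) i).continuous.measurable

theorem disjoint_unitCube {d : ℕ} {j j' : Fin d → ℤ} (h : j ≠ j') :
    Disjoint (unitCube j) (unitCube j') := by
  rw [Set.disjoint_left]
  intro x hx hx'
  apply h
  funext i
  have h1 := hx i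
  have h2 := hx' i
  simp only [mem_Ico] at h1 h2
  have e1 : ⌊x i⌋ = j i := Int.floor_eq_iff.2 ⟨h1.1, by exact_mod_cast h1.2⟩
  have e2 : ⌊x i⌋ = j' i := Int.floor_eq_iff.2 ⟨h2.1, by exact_mod_cast h2.2⟩
  omega

/-- Step IV of Lemma 3.4: if a proportion `≥ λ/2` of the unit
subcubes of a cube `Q ⊆ B = closedBall x₀ r` have small infimum of `u`
(`inf_{R_j} u < η m` with `η = (2C'_H)⁻¹`, `m` the average of `u` over `B`),
and `u` satisfies the unit-scale Harnack bound on each subcube, then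
`sup_B u ≥ (1 + c₃ λ) m` for a dimensional constant `c₃ > 0`. -/
theorem sup_ge_of_many_small_cubes (d : ℕ) (hd : 0 < d) :
    ∃ c₃ : ℝ, 0 < c₃ ∧
      ∀ (C'H lam l r : ℝ) (x₀ : EuclideanSpace ℝ (Fin d))
        (u : EuclideanSpace ℝ (Fin d) → ℝ) (a : Fin d → ℝ)
        (J Jη : Finset (Fin d → ℤ)),
        0 < C'H → 0 < lam → lam ≤ 1 → 0 < l → 0 < r →
        Continuous u → ContDiff ℝ 2 u → (∀ x, -lap u x ≤ 1) → (∀ x, 1 ≤ u x) →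
        (∀ j ∈ J, unitCube j ⊆ cornerCube a l) →
        cornerCube a l ⊆ closedBall x₀ r →
        l ≤ r → r ≤ 4 * Real.sqrt d * l →
        (∀ j ∈ J, ∀ x ∈ unitCube j, (⨍ y in unitCube j, u y) ≤ C'H * u x) →
        Jη ⊆ J →
        (∀ j ∈ Jη, ∃ x ∈ unitCube j,
          u x < (2 * C'H)⁻¹ * ⨍ y in closedBall x₀ r, u y) →
        lam / 2 * l ^ d ≤ (Jη.card : ℝ) →
        ∃ ξ ∈ closedBall x₀ r,
          (1 + c₃ * lam) * (⨍ y in closedBall x₀ r, u y) ≤ u ξ := by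
  set ω := (volume (ball (0 : EuclideanSpace ℝ (Fin d)) 1)).toReal with hω
  have hωpos : 0 < ω :=
    ENNReal.toReal_pos (measure_ball_pos volume 0 one_pos).ne' measure_ball_lt_top.ne
  have hsd : 0 < Real.sqrt d := Real.sqrt_pos.2 (by exact_mod_cast hd)
  have h4sd : 0 < 4 * Real.sqrt d := by linarith
  have hKpos : 0 < 4 * ω * (4 * Real.sqrt d) ^ d :=
    mul_pos (mul_pos four_pos hωpos) (pow_pos h4sd d)
  refine ⟨(4 * ω * (4 * Real.sqrt d) ^ d)⁻¹, inv_pos.2 hKpos, ?_⟩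
  intro C'H lam l r x₀ u a J Jη hC hlam hlam1 hl hr hu _ _ hu1 hJQ hQB hlr hrl
    hHarnack hJJ hsmall hcard
  set c₃ := (4 * ω * (4 * Real.sqrt d) ^ d)⁻¹ with hc₃
  set B := closedBall x₀ r with hB
  set m := ⨍ y in B, u y with hm
  set X := ⋃ j ∈ Jη, unitCube j with hX
  have hBmeas : MeasurableSet B := measurableSet_closedBall
  have hBcomp : IsCompact B := isCompact_closedBall x₀ r
  have hintB : IntegrableOn u B := hu.continuousOn.integrableOn_compact hBcomp
  have hXB : X ⊆ B := by
    rw [hX]; exact Set.iUnion₂_subset fun j hj => (hJQ j (hJJ hj)).trans hQB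
  have hXmeas : MeasurableSet X :=
    MeasurableSet.biUnion Jη.countable_toSet fun j _ => measurableSet_unitCube j
  have hdisj : (Jη : Set (Fin d → ℤ)).Pairwise (Function.onFun Disjoint unitCube) :=
    fun j _ j' _ h => disjoint_unitCube h
  have hμX : volume X = Jη.card := by
    rw [hX, measure_biUnion_finset hdisj fun j _ => measurableSet_unitCube j]
    simp [volume_unitCube]
  set vX := (Jη.card : ℝ) with hvX
  set vB := (volume B).toReal with hvB
  have hμXr : (volume X).toReal = vX := by rw [hμX]; simp [hvX]
  have hvBpos : 0 < vB :=
    ENNReal.toReal_pos (measure_closedBall_pos volume x₀ hr).ne' measure_closedBall_lt_top.ne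
  have hvBtop : volume B ≠ ⊤ := measure_closedBall_lt_top.ne
  have hXle : vX ≤ vB := by
    rw [← hμXr]; exact ENNReal.toReal_mono hvBtop (measure_mono hXB)
  have hintX : IntegrableOn u X := hintB.mono_set hXB
  have hiB : ∫ y in B, u y = m * vB := by
    rw [hm, setAverage_eq, measureReal_def, ← hvB, smul_eq_mul]
    field_simp
  -- m ≥ 1
  have hm1 : 1 ≤ m := by
    have h1 : ∫ y in B, (1 : ℝ) ≤ ∫ y in B, u y := by
      refine setIntegral_mono_on (integrableOn_const measure_closedBall_lt_top.ne)
        hintB hBmeas fun y _ => hu1 y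
    rw [setIntegral_const, smul_eq_mul, mul_one] at h1
    rw [hiB] at h1
    change vB ≤ m * vB at h1
    nlinarith
  -- each small cube contributes at most m/2
  have hcube : ∀ j ∈ Jη, ∫ y in unitCube j, u y ≤ m / 2 := by
    intro j hj
    obtain ⟨x, hx, hxlt⟩ := hsmall j hj
    have h1 := hHarnack j (hJJ hj) x hx
    have h2 : C'H * u x < C'H * ((2 * C'H)⁻¹ * m) := mul_lt_mul_of_pos_left hxlt hC
    have h3 : C'H * ((2 * C'H)⁻¹ * m) = m / 2 := by
      field_simp
    have havg : (⨍ y in unitCube j, u y) = ∫ y in unitCube j, u y := by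
      rw [setAverage_eq, measureReal_def, volume_unitCube]; simp
    rw [havg] at h1
    linarith
  have hX2 : ∫ y in X, u y ≤ m / 2 * vX := by
    rw [hX, integral_biUnion_finset Jη (fun j _ => measurableSet_unitCube j) hdisj
      (fun j hj => hintB.mono_set ((hJQ j (hJJ hj)).trans hQB))]
    calc ∑ j ∈ Jη, ∫ y in unitCube j, u y ≤ ∑ _j ∈ Jη, m / 2 :=
          Finset.sum_le_sum fun j hj => hcube j hj
      _ = m / 2 * vX := by rw [Finset.sum_const, nsmul_eq_mul]; ring
  -- max point
  obtain ⟨ξ, hξB, hξmax⟩ := hBcomp.exists_isMaxOn ⟨x₀, mem_closedBall_self hr.le⟩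
    hu.continuousOn
  refine ⟨ξ, hξB, ?_⟩
  have hsplit : ∫ y in B, u y = (∫ y in X, u y) + ∫ y in B \ X, u y := by
    calc ∫ y in B, u y = ∫ y in X ∪ (B \ X), u y := by rw [union_diff_cancel hXB]
      _ = (∫ y in X, u y) + ∫ y in B \ X, u y :=
          setIntegral_union disjoint_sdiff_self_right (hBmeas.diff hXmeas) hintX
            (hintB.mono_set diff_subset)
  have hμdiff : (volume (B \ X)).toReal = vB - vX := by
    rw [measure_diff hXB hXmeas.nullMeasurableSet (by rw [hμX]; exact ENNReal.natCast_ne_top _)]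
    rw [ENNReal.toReal_sub_of_le (measure_mono hXB) hvBtop, hμXr, hvB]
  have hup : ∫ y in B \ X, u y ≤ u ξ * (vB - vX) := by
    calc ∫ y in B \ X, u y ≤ ∫ _y in B \ X, u ξ :=
          setIntegral_mono_on (hintB.mono_set diff_subset)
            (integrableOn_const ((measure_mono diff_subset).trans_lt
              measure_closedBall_lt_top).ne) (hBmeas.diff hXmeas)
            (fun y hy => hξmax (diff_subset hy))
      _ = u ξ * (vB - vX) := by rw [setIntegral_const, smul_eq_mul, measureReal_def, hμdiff, mul_comm]
  -- key numeric bound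
  have hvBeq : vB = r ^ d * ω := by
    rw [hvB, hB, Measure.addHaar_closedBall volume x₀ hr.le, ENNReal.toReal_mul,
      ENNReal.toReal_ofReal (by positivity : (0:ℝ) ≤ r ^ _), finrank_euclideanSpace_fin]
  have hrpow : r ^ d ≤ (4 * Real.sqrt d) ^ d * l ^ d := by
    rw [← mul_pow]
    exact pow_le_pow_left₀ hr.le hrl d
  have hkey : c₃ * lam * vB ≤ vX / 2 := by
    have h1 : c₃ * lam * vB ≤ c₃ * lam * ((4 * Real.sqrt d) ^ d * l ^ d * ω) := by
      apply mul_le_mul_of_nonneg_left _ (by positivity)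
      rw [hvBeq]
      exact mul_le_mul_of_nonneg_right hrpow hωpos.le
    have h2 : c₃ * lam * ((4 * Real.sqrt d) ^ d * l ^ d * ω) = lam * l ^ d / 4 := by
      rw [hc₃]
      field_simp
    nlinarith
  have hmain : m * vB - m / 2 * vX ≤ u ξ * (vB - vX) := by
    rw [hiB] at hsplit
    linarith
  have huξ : 1 ≤ u ξ := hu1 ξ
  have hvXnn : 0 ≤ vX := Nat.cast_nonneg _
  have hcnn : 0 ≤ c₃ * lam := mul_nonneg (inv_pos.2 hKpos).le hlam.le
  clear_value m vX vB c₃ X B ω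
  have a1 : m / 2 * vX ≤ m / 2 * vB :=
    mul_le_mul_of_nonneg_left hXle (by linarith only [hm1])
  have a2 : vB ≤ m * vB := le_mul_of_one_le_left hvBpos.le hm1
  have h5 : 0 < m * vB - m / 2 * vX := by linarith only [a1, a2, hvBpos]
  have hMpos : 0 < vB - vX := by
    by_contra h
    push_neg at h
    have h6 : u ξ * (vB - vX) ≤ 0 :=
      mul_nonpos_of_nonneg_of_nonpos (by linarith only [huξ]) h
    linarith only [hmain, h5, h6]
  have hεm : c₃ * lam * (vB - vX) ≤ vX / 2 := by
    refine le_trans ?_ hkey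
    have : vB - vX ≤ vB := by linarith only [hvXnn]
    exact mul_le_mul_of_nonneg_left this hcnn
  have b1 : m * (c₃ * lam * (vB - vX)) ≤ m * (vX / 2) :=
    mul_le_mul_of_nonneg_left hεm (by linarith only [hm1])
  have hfin : (1 + c₃ * lam) * m * (vB - vX) ≤ u ξ * (vB - vX) := by
    linarith only [b1, hmain]
  exact le_of_mul_le_mul_right hfin hMpos
end
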